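/- Let 𝒪 be the ring of integers of ℚ(√−11) and X = (1+√−11)/2, so that 2 = −1 + X − X². If z ∈ 𝒪 can be written as Σ_{j=0}^n α_j X^j with α_j ∈ {−1,0,1}, then z + 1 can be written as Σ_{j=0}^{n+2} β_j X^j with β_j ∈ {−1,0,1}. -/

import Mathlib

open Polynomial

/-- The ring of integers `𝒪 = ℤ[(1+√-11)/2]` of `ℚ(√-11)`, presented as
`ℤ[x]/(x² - x + 3)`, the minimal polynomial of `X = (1+√-11)/2`. -/
noncomputable abbrev OQRootNeg11 : Type :=
  AdjoinRoot ((X : Polynomial ℤ) ^ 2 - X + 3)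

/-- The generator `X = (1+√-11)/2` of `𝒪`, satisfying `1 + 1 = -1 + X - X²`. -/
noncomputable abbrev XNeg11 : OQRootNeg11 :=
  AdjoinRoot.root ((X : Polynomial ℤ) ^ 2 - X + 3)

lemma xneg11_rel : XNeg11 ^ 2 - XNeg11 + 3 = 0 := by
  have h := AdjoinRoot.mk_self (f := (X : Polynomial ℤ) ^ 2 - X + 3)
  rw [map_add, map_sub, map_pow, AdjoinRoot.mk_X] at h
  rw [map_ofNat] at h
  simpa using h

/-- Single-step carry decomposition: for `-2 ≤ v ≤ 2` and a digit `b` (with sign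
constraints in the extreme cases), `v + b·X` can be written as
`r + a'·X + b'·X²` with digits `r, a', b'` and `a'·b' ≤ 0`. -/
lemma decomp (v b : ℤ) (hv1 : -2 ≤ v) (hv2 : v ≤ 2)
    (hb : b = -1 ∨ b = 0 ∨ b = 1)
    (h2 : v = 2 → b ≤ 0) (h2' : v = -2 → 0 ≤ b) :
    ∃ r a' b' : ℤ, (r = -1 ∨ r = 0 ∨ r = 1) ∧ (a' = -1 ∨ a' = 0 ∨ a' = 1) ∧
      (b' = -1 ∨ b' = 0 ∨ b' = 1) ∧ a' * b' ≤ 0 ∧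
      (v : OQRootNeg11) + b * XNeg11 = r + a' * XNeg11 + b' * XNeg11 ^ 2 := by
  have h0 := xneg11_rel
  interval_cases v
  · refine ⟨1, b - 1, 1, by norm_num, ?_, by norm_num, ?_, ?_⟩
    · rcases hb with h | h | h <;> omega
    · have := h2' rfl; rcases hb with h | h | h <;> simp [h]
    · push_cast; linear_combination -h0
  · exact ⟨-1, b, 0, by norm_num, hb, by norm_num, by simp, by push_cast; ring⟩
  · exact ⟨0, b, 0, by norm_num, hb, by norm_num, by simp, by push_cast; ring⟩
  · exact ⟨1, b, 0, by norm_num, hb, by norm_num, by simp, by push_cast; ring⟩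
  · refine ⟨-1, b + 1, -1, by norm_num, ?_, by norm_num, ?_, ?_⟩
    · rcases hb with h | h | h <;> omega
    · have := h2 rfl; rcases hb with h | h | h <;> simp [h]
    · push_cast; linear_combination h0

/-- The carry-propagation induction: adding `a + b·X` (digits of opposite sign)
to a digit polynomial of degree `≤ n` yields a digit polynomial of degree
`≤ n + 2`. -/
lemma main_lemma : ∀ (n : ℕ) (α : ℕ → ℤ), (∀ j, α j = -1 ∨ α j = 0 ∨ α j = 1) →
    ∀ a b : ℤ, (a = -1 ∨ a = 0 ∨ a = 1) → (b = -1 ∨ b = 0 ∨ b = 1) → a * b ≤ 0 →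
    ∃ β : ℕ → ℤ, (∀ j, β j = -1 ∨ β j = 0 ∨ β j = 1) ∧
      (∑ j ∈ Finset.range (n + 1), (α j : OQRootNeg11) * XNeg11 ^ j) + a + b * XNeg11
        = ∑ j ∈ Finset.range (n + 3), (β j : OQRootNeg11) * XNeg11 ^ j := by
  intro n
  induction n with
  | zero =>
    intro α hα a b ha hb hab
    have hv1 : -2 ≤ α 0 + a := by rcases hα 0 with h|h|h <;> rcases ha with h'|h'|h' <;> omega
    have hv2 : α 0 + a ≤ 2 := by rcases hα 0 with h|h|h <;> rcases ha with h'|h'|h' <;> omega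
    have h2 : α 0 + a = 2 → b ≤ 0 := by
      intro h
      have : a = 1 := by rcases hα 0 with h'|h'|h' <;> rcases ha with h''|h''|h'' <;> omega
      nlinarith
    have h2' : α 0 + a = -2 → 0 ≤ b := by
      intro h
      have : a = -1 := by rcases hα 0 with h'|h'|h' <;> rcases ha with h''|h''|h'' <;> omega
      nlinarith
    obtain ⟨r, a', b', hr, ha', hb', _, heq⟩ := decomp (α 0 + a) b hv1 hv2 hb h2 h2'
    refine ⟨fun j => if j = 0 then r else if j = 1 then a' else if j = 2 then b' else 0,
      ?_, ?_⟩
    · intro j; dsimp only; split_ifs <;> first | assumption | norm_num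
    · simp only [Finset.sum_range_succ, Finset.sum_range_zero]
      push_cast at heq ⊢
      linear_combination heq
  | succ n ih =>
    intro α hα a b ha hb hab
    have hv1 : -2 ≤ α 0 + a := by rcases hα 0 with h|h|h <;> rcases ha with h'|h'|h' <;> omega
    have hv2 : α 0 + a ≤ 2 := by rcases hα 0 with h|h|h <;> rcases ha with h'|h'|h' <;> omega
    have h2 : α 0 + a = 2 → b ≤ 0 := by
      intro h
      have : a = 1 := by rcases hα 0 with h'|h'|h' <;> rcases ha with h''|h''|h'' <;> omega
      nlinarith
    have h2' : α 0 + a = -2 → 0 ≤ b := by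
      intro h
      have : a = -1 := by rcases hα 0 with h'|h'|h' <;> rcases ha with h''|h''|h'' <;> omega
      nlinarith
    obtain ⟨r, a', b', hr, ha', hb', hab', heq⟩ := decomp (α 0 + a) b hv1 hv2 hb h2 h2'
    obtain ⟨β', hβ', heq'⟩ := ih (fun j => α (j + 1)) (fun j => hα (j + 1)) a' b' ha' hb' hab'
    refine ⟨fun j => if j = 0 then r else β' (j - 1), ?_, ?_⟩
    · intro j; dsimp only; split_ifs <;> first | assumption | apply hβ'
    · rw [Finset.sum_range_succ' (fun j => (α j : OQRootNeg11) * XNeg11 ^ j),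
        show n + 1 + 3 = n + 3 + 1 from rfl,
        Finset.sum_range_succ' (fun j => ((if j = 0 then r else β' (j - 1) : ℤ) : OQRootNeg11) * XNeg11 ^ j)]
      simp only [if_pos rfl, Nat.add_sub_cancel, Nat.succ_ne_zero, if_neg (Nat.succ_ne_zero _)]
      have key : ∀ (γ : ℕ → ℤ) (m : ℕ), ∑ j ∈ Finset.range m, (γ j : OQRootNeg11) * XNeg11 ^ (j + 1)
          = XNeg11 * ∑ j ∈ Finset.range m, (γ j : OQRootNeg11) * XNeg11 ^ j := by
        intro γ m
        rw [Finset.mul_sum]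
        exact Finset.sum_congr rfl fun j _ => by ring
      rw [key, key]
      push_cast at heq ⊢
      linear_combination heq + XNeg11 * heq'

/-- If `z ∈ 𝒪` is a `{-1,0,1}`-digit polynomial of degree `≤ n` in
`X = (1+√-11)/2`, then `z + 1` is such a polynomial of degree `≤ n + 2`. -/
theorem add_one_degree_le_add_two (n : ℕ) (α : ℕ → ℤ)
    (hα : ∀ j, α j = -1 ∨ α j = 0 ∨ α j = 1) (z : OQRootNeg11)
    (hz : z = ∑ j ∈ Finset.range (n + 1), (α j : OQRootNeg11) * XNeg11 ^ j) :
    ∃ β : ℕ → ℤ, (∀ j, β j = -1 ∨ β j = 0 ∨ β j = 1) ∧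
      z + 1 = ∑ j ∈ Finset.range (n + 3), (β j : OQRootNeg11) * XNeg11 ^ j := by
  obtain ⟨β, hβ, heq⟩ := main_lemma n α hα 1 0 (by norm_num) (by norm_num) (by norm_num)
  refine ⟨β, hβ, ?_⟩
  rw [hz]
  simpa using heq
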